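/- (Lattice point count in a convex body.) Let $\Omega \subset \mathbb{R}^D$ be an open bounded convex set of inradius $r(\Omega)$, let $0 < m \le r(\Omega)$, and let $a \in \mathbb{R}^D$. Then $\#(\Omega \cap (m\mathbb{Z}^D + a)) = \big(1 + O_D(\tfrac{m}{r(\Omega)})\big) m^{-D} \, \mathrm{mes}(\Omega)$, i.e. the count equals $m^{-D}\mathrm{mes}(\Omega)$ up to a multiplicative error of the form $1 + C_D \tfrac{m}{r(\Omega)}$ with $C_D$ depending only on $D$. -/

import Mathlib

open MeasureTheory Metric Set

namespace Stmt9Aux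

/-- elementary: `(1+t)^n - 1 ≤ n * t * (1+t)^n` for `t ≥ 0`. -/
lemma pow_sub_one_le (t : ℝ) (ht : 0 ≤ t) : ∀ n : ℕ, (1+t)^n - 1 ≤ n * t * (1+t)^n := by
  intro n
  induction n with
  | zero => simp
  | succ n ih =>
    have h1 : (0:ℝ) ≤ (1+t)^n := by positivity
    have h2 : (1+t)^(n+1) = (1+t)^n + t*(1+t)^n := by ring
    have h3 : (1+t)^n ≤ (1+t)^(n+1) := by nlinarith
    push_cast
    have h4 : (0:ℝ) ≤ ((n:ℝ)+1)*t := by positivity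
    nlinarith [mul_le_mul_of_nonneg_left h3 h4]

variable {D : ℕ}

/-- cube with corner `fun i => m * k i + a i` and side `m`. -/
def cube (m : ℝ) (a : EuclideanSpace ℝ (Fin D)) (k : Fin D → ℤ) : Set (EuclideanSpace ℝ (Fin D)) :=
  {x | ∀ i, m * k i + a i ≤ x i ∧ x i < m * k i + a i + m}

lemma cube_eq_preimage (m : ℝ) (a : EuclideanSpace ℝ (Fin D)) (k : Fin D → ℤ) :
    cube m a k = (MeasurableEquiv.toLp 2 (Fin D → ℝ)).symm ⁻¹'
      (Set.pi univ fun i => Ico (m * k i + a i) (m * k i + a i + m)) := by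
  ext x
  simp [cube, Set.mem_pi]

lemma measurableSet_cube (m : ℝ) (a : EuclideanSpace ℝ (Fin D)) (k : Fin D → ℤ) :
    MeasurableSet (cube m a k) := by
  rw [cube_eq_preimage]
  exact (MeasurableEquiv.toLp 2 (Fin D → ℝ)).symm.measurable
    (MeasurableSet.univ_pi fun i => measurableSet_Ico)

lemma volume_cube (m : ℝ) (hm : 0 ≤ m) (a : EuclideanSpace ℝ (Fin D)) (k : Fin D → ℤ) :
    volume (cube m a k) = ENNReal.ofReal (m ^ D) := by
  rw [cube_eq_preimage,
    (EuclideanSpace.volume_preserving_symm_measurableEquiv_toLp (Fin D)).measure_preimage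
      (MeasurableSet.univ_pi fun i => measurableSet_Ico).nullMeasurableSet,
    volume_pi_pi]
  simp [Real.volume_Ico, ENNReal.ofReal_pow hm]

/-- the floor point of `x` in the lattice. -/
noncomputable def kfloor (m : ℝ) (a x : EuclideanSpace ℝ (Fin D)) : Fin D → ℤ :=
  fun i => ⌊(x i - a i) / m⌋

lemma mem_cube_kfloor {m : ℝ} (hm : 0 < m) (a x : EuclideanSpace ℝ (Fin D)) :
    x ∈ cube m a (kfloor m a x) := by
  intro i
  have h1 : ((⌊(x i - a i) / m⌋ : ℝ)) ≤ (x i - a i) / m := Int.floor_le _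
  have h2 : (x i - a i) / m < ⌊(x i - a i) / m⌋ + 1 := Int.lt_floor_add_one _
  have h1' : (⌊(x i - a i) / m⌋ : ℝ) * m ≤ x i - a i := (le_div_iff₀ hm).mp h1
  have h2' : x i - a i < ((⌊(x i - a i) / m⌋ : ℝ) + 1) * m := (div_lt_iff₀ hm).mp h2
  constructor
  · simp only [kfloor]; nlinarith
  · simp only [kfloor]; nlinarith

lemma eq_kfloor_of_mem_cube {m : ℝ} (hm : 0 < m) {a x : EuclideanSpace ℝ (Fin D)}
    {k : Fin D → ℤ} (h : x ∈ cube m a k) : k = kfloor m a x := by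
  funext i
  obtain ⟨hl, hr⟩ := h i
  symm
  rw [kfloor, Int.floor_eq_iff]
  constructor
  · rw [le_div_iff₀ hm]; nlinarith
  · rw [div_lt_iff₀ hm]; push_cast; nlinarith

lemma abs_coord_le_norm (x : EuclideanSpace ℝ (Fin D)) (i : Fin D) : |x i| ≤ ‖x‖ := by
  rw [EuclideanSpace.norm_eq]
  have h1 : |x i| ^ 2 ≤ ∑ j, ‖x j‖ ^ 2 := by
    refine Finset.single_le_sum (f := fun j => ‖x j‖ ^ 2) (fun j _ => by positivity)
      (Finset.mem_univ i) |>.trans_eq' ?_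
    rw [Real.norm_eq_abs]
  calc |x i| = Real.sqrt (|x i| ^ 2) := by rw [Real.sqrt_sq (abs_nonneg _)]
    _ ≤ _ := Real.sqrt_le_sqrt h1

lemma dist_le_sqrt_mul {m : ℝ} (hm : 0 ≤ m) (x p : EuclideanSpace ℝ (Fin D))
    (h : ∀ i, dist (x i) (p i) ≤ m) : dist x p ≤ Real.sqrt D * m := by
  rw [EuclideanSpace.dist_eq]
  have h1 : ∑ i, dist (x i) (p i) ^ 2 ≤ (D : ℝ) * m ^ 2 := by
    calc ∑ i, dist (x i) (p i) ^ 2 ≤ ∑ _i : Fin D, m ^ 2 :=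
          Finset.sum_le_sum fun i _ => by
            have := h i; nlinarith [dist_nonneg (x := x i) (y := p i)]
      _ = (D : ℝ) * m ^ 2 := by simp [Finset.sum_const]
  calc Real.sqrt (∑ i, dist (x i) (p i) ^ 2) ≤ Real.sqrt ((D : ℝ) * m ^ 2) :=
        Real.sqrt_le_sqrt h1
    _ = Real.sqrt D * m := by
        rw [Real.sqrt_mul (by positivity), Real.sqrt_sq hm]

lemma dist_lt_sqrt_mul (hD : 0 < D) {m : ℝ} (hm : 0 < m) (x p : EuclideanSpace ℝ (Fin D))
    (h : ∀ i, dist (x i) (p i) < m) : dist x p < Real.sqrt D * m := by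
  rw [EuclideanSpace.dist_eq]
  have h1 : ∑ i, dist (x i) (p i) ^ 2 < (D : ℝ) * m ^ 2 := by
    have : ∑ i, dist (x i) (p i) ^ 2 < ∑ _i : Fin D, m ^ 2 := by
      refine Finset.sum_lt_sum_of_nonempty ?_ fun i _ => by
        have := h i; nlinarith [dist_nonneg (x := x i) (y := p i)]
      simpa [Finset.univ_nonempty_iff] using Fin.pos_iff_nonempty.mp hD
    calc ∑ i, dist (x i) (p i) ^ 2 < ∑ _i : Fin D, m ^ 2 := this
      _ = (D : ℝ) * m ^ 2 := by simp [Finset.sum_const]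
  calc Real.sqrt (∑ i, dist (x i) (p i) ^ 2) < Real.sqrt ((D : ℝ) * m ^ 2) := by
        refine Real.sqrt_lt_sqrt (by positivity) h1
    _ = Real.sqrt D * m := by
        rw [Real.sqrt_mul (by positivity), Real.sqrt_sq hm.le]

end Stmt9Aux

open Stmt9Aux

set_option maxHeartbeats 2000000 in
/-- Lattice point count in a convex body: if `Ω ⊂ ℝ^D` is a convex body containing a
ball of radius `ρ` and `0 < m ≤ ρ`, then for any `a ∈ ℝ^D` the number of points of the
shifted lattice `m·ℤ^D + a` inside `Ω` equals `m^{-D}·mes(Ω)` up to a multiplicative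
error `1 + O_D(m/ρ)`. -/
theorem stmt_9 (D : ℕ) :
    ∃ C : ℝ, 0 < C ∧
      ∀ (Ω : Set (EuclideanSpace ℝ (Fin D))) (ρ m : ℝ) (a : EuclideanSpace ℝ (Fin D)),
        IsOpen Ω → Bornology.IsBounded Ω → Convex ℝ Ω →
        (∃ x, ball x ρ ⊆ Ω) → 0 < m → m ≤ ρ →
        (Ω ∩ {x | ∃ k : Fin D → ℤ, ∀ i, x i = m * k i + a i}).Finite ∧
        |((Ω ∩ {x | ∃ k : Fin D → ℤ, ∀ i, x i = m * k i + a i}).ncard : ℝ)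
            - m ^ (-(D : ℤ)) * (volume Ω).toReal|
          ≤ C * (m / ρ) * (m ^ (-(D : ℤ)) * (volume Ω).toReal) := by
  rcases Nat.eq_zero_or_pos D with hD0 | hD
  · subst hD0
    refine ⟨1, one_pos, fun Ω ρ m a hopen hbdd hconv ⟨x₀, hball⟩ hm hmρ => ?_⟩
    have hρ : 0 < ρ := lt_of_lt_of_le hm hmρ
    have hsub : ∀ x y : EuclideanSpace ℝ (Fin 0), x = y := fun x y => congrArg (WithLp.toLp 2) (funext fun i : Fin 0 => i.elim0)
    have hΩ : Ω = univ := by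
      apply eq_univ_of_forall
      intro y
      rw [hsub y x₀]
      exact hball (mem_ball_self hρ)
    have hL : {x : EuclideanSpace ℝ (Fin 0) | ∃ k : Fin 0 → ℤ, ∀ i, x i = m * k i + a i} = univ := by
      apply eq_univ_of_forall
      intro y
      exact ⟨fun i => 0, fun i => i.elim0⟩
    rw [hΩ, hL, univ_inter]
    haveI : Unique (EuclideanSpace ℝ (Fin 0)) := ⟨⟨0⟩, fun a => hsub a 0⟩
    have hvol : volume (univ : Set (EuclideanSpace ℝ (Fin 0))) = 1 := by
      rw [volume_euclideanSpace_eq_dirac]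
      simp
    constructor
    · exact finite_univ
    · rw [Set.ncard_univ, Nat.card_unique, hvol]
      simp only [Nat.cast_one, ENNReal.toReal_one, neg_zero, zpow_zero, one_mul, mul_one]
      norm_num
      positivity
  · refine ⟨(D : ℝ) * Real.sqrt D * (1 + Real.sqrt D) ^ D + Real.sqrt D, ?_, ?_⟩
    · have h0 : 0 < Real.sqrt D := Real.sqrt_pos.mpr (by exact_mod_cast hD)
      positivity
    · rintro Ω ρ m a hopen hbdd hconv ⟨x₀, hball⟩ hm hmρ
      have hρ : 0 < ρ := lt_of_lt_of_le hm hmρ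
      set sqD := Real.sqrt D with hsqD_def
      have hsqD : 1 ≤ sqD := by
        rw [hsqD_def, show (1:ℝ) = Real.sqrt 1 by rw [Real.sqrt_one]]
        exact Real.sqrt_le_sqrt (by exact_mod_cast hD)
      have hsqD0 : 0 < sqD := lt_of_lt_of_le one_pos hsqD
      set t := sqD * (m / ρ) with ht_def
      have ht0 : 0 < t := by positivity
      have htρ : t * ρ = sqD * m := by rw [ht_def]; field_simp
      have htsqD : t ≤ sqD := by
        rw [ht_def]
        nlinarith [div_le_one_of_le₀ hmρ hρ.le]
      set φ : (Fin D → ℤ) → EuclideanSpace ℝ (Fin D) :=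
        fun k => WithLp.toLp 2 (fun i => m * k i + a i : Fin D → ℝ) with hφ_def
      set K := {k : Fin D → ℤ | φ k ∈ Ω} with hK_def
      have hφinj : Function.Injective φ := by
        intro k k' h
        funext i
        have := congrFun (congrArg WithLp.ofLp h) i
        simp only [hφ_def, WithLp.ofLp_toLp] at this
        field_simp at this
        have h2 : m * ((k i : ℝ) - k' i) = 0 := by linarith
        rcases mul_eq_zero.mp h2 with h | h
        · exact absurd h hm.ne'
        · exact_mod_cast sub_eq_zero.mp h
      have h_inter : Ω ∩ {x | ∃ k : Fin D → ℤ, ∀ i, x i = m * k i + a i} = φ '' K := by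
        ext x
        constructor
        · rintro ⟨hxΩ, k, hk⟩
          have hxk : x = φ k := congrArg (WithLp.toLp 2) (funext fun i => hk i)
          exact ⟨k, by rw [hK_def, mem_setOf_eq, ← hxk]; exact hxΩ, hxk.symm⟩
        · rintro ⟨k, hkK, rfl⟩
          exact ⟨hkK, k, fun i => rfl⟩
      -- finiteness
      obtain ⟨R, hR⟩ := hbdd.subset_closedBall 0
      have hKfin : K.Finite := by
        have hsub : K ⊆ Set.pi univ fun i =>
            {z : ℤ | (z : ℝ) ∈ Icc ((-R - a i) / m) ((R - a i) / m)} := by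
          intro k hk i _
          have h1 : ‖φ k‖ ≤ R := by
            have := hR hk
            simpa [dist_zero_right] using mem_closedBall_iff_norm.mp this
          have h2 : |m * k i + a i| ≤ R := le_trans (abs_coord_le_norm (φ k) i) h1
          rw [abs_le] at h2
          constructor
          · rw [div_le_iff₀ hm]; nlinarith [h2.1]
          · rw [le_div_iff₀ hm]; nlinarith [h2.2]
        refine Set.Finite.subset (Set.Finite.pi fun i => ?_) hsub
        have : {z : ℤ | (z : ℝ) ∈ Icc ((-R - a i) / m) ((R - a i) / m)} ⊆
            Set.Icc ⌈(-R - a i) / m⌉ ⌊(R - a i) / m⌋ := by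
          intro z hz
          exact ⟨Int.ceil_le.mpr hz.1, Int.le_floor.mpr hz.2⟩
        exact (Set.finite_Icc _ _).subset this
      have hfin : (Ω ∩ {x | ∃ k : Fin D → ℤ, ∀ i, x i = m * k i + a i}).Finite := by
        rw [h_inter]; exact hKfin.image φ
      refine ⟨hfin, ?_⟩
      have hncard : (Ω ∩ {x | ∃ k : Fin D → ℤ, ∀ i, x i = m * k i + a i}).ncard = K.ncard := by
        rw [h_inter, Set.ncard_image_of_injective K hφinj]
      -- volume of the union of cubes
      set U := ⋃ k ∈ K, cube m a k with hU_def
      have hUvol : volume U = K.ncard * ENNReal.ofReal (m ^ D) := by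
        have hUeq : U = ⋃ k ∈ hKfin.toFinset, cube m a k := by
          simp [hU_def, Set.Finite.mem_toFinset]
        rw [hUeq, measure_biUnion_finset ?_ (fun k _ => measurableSet_cube m a k)]
        · rw [Finset.sum_congr rfl fun k _ => volume_cube m hm.le a k,
            Finset.sum_const, Set.ncard_eq_toFinset_card K hKfin]
          simp [nsmul_eq_mul]
        · intro k hk k' hk' hne
          rw [Function.onFun, Set.disjoint_left]
          intro x hx hx'
          exact hne ((eq_kfloor_of_mem_cube hm hx).trans (eq_kfloor_of_mem_cube hm hx').symm)
      have hvolfin : volume Ω ≠ ⊤ := hbdd.measure_lt_top.ne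
      have hclosure_vol : volume (closure Ω) = volume Ω := by
        refine le_antisymm ?_ (measure_mono subset_closure)
        calc volume (closure Ω) = volume (Ω ∪ frontier Ω) := by
              rw [← closure_eq_self_union_frontier]
          _ ≤ volume Ω + volume (frontier Ω) := measure_union_le _ _
          _ = volume Ω := by rw [hconv.addHaar_frontier volume, add_zero]
      -- upper inclusion
      have hUup : U ⊆ AffineMap.homothety x₀ (1 + t) '' closure Ω := by
        rintro x hx
        simp only [hU_def, Set.mem_iUnion] at hx
        obtain ⟨k, hkK, hxk⟩ := hx
        set p := φ k with hp_def
        have hpΩ : p ∈ Ω := hkK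
        have hdist : dist x p ≤ sqD * m := by
          refine dist_le_sqrt_mul hm.le x p fun i => ?_
          obtain ⟨h1, h2⟩ := hxk i
          rw [Real.dist_eq, abs_le]
          have : p i = m * k i + a i := rfl
          constructor <;> nlinarith
        set c := 1 + t with hc_def
        have hc : 0 < c := by positivity
        set z := x₀ + c⁻¹ • (x - x₀) with hz_def
        refine ⟨z, ?_, ?_⟩
        · -- z ∈ closure Ω
          set q := x₀ + t⁻¹ • (x - p) with hq_def
          have hq : q ∈ closure Ω := by
            have hq_mem : q ∈ closedBall x₀ ρ := by
              rw [mem_closedBall_iff_norm, hq_def]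
              have : x₀ + t⁻¹ • (x - p) - x₀ = t⁻¹ • (x - p) := by abel
              rw [this, norm_smul, Real.norm_eq_abs, abs_of_pos (inv_pos.mpr ht0)]
              have hxp : ‖x - p‖ ≤ t * ρ := by rw [htρ]; rwa [← dist_eq_norm]
              calc t⁻¹ * ‖x - p‖ ≤ t⁻¹ * (t * ρ) := by
                    exact mul_le_mul_of_nonneg_left hxp (inv_pos.mpr ht0).le
                _ = ρ := by field_simp
            rw [← closure_ball x₀ hρ.ne'] at hq_mem
            exact closure_mono hball hq_mem
          have hz_eq : z = c⁻¹ • p + (t * c⁻¹) • q := by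
            rw [hz_def, hq_def]
            have ht' : t ≠ 0 := ht0.ne'
            have hc' : c ≠ 0 := hc.ne'
            match_scalars <;> (rw [hc_def]; field_simp) <;> ring
          rw [hz_eq]
          refine (hconv.closure) (subset_closure hpΩ) hq (by positivity) (by positivity) ?_
          rw [hc_def]; field_simp
        · rw [AffineMap.homothety_apply]
          simp only [vsub_eq_sub, vadd_eq_add, hz_def]
          have : x₀ + c⁻¹ • (x - x₀) - x₀ = c⁻¹ • (x - x₀) := by abel
          rw [this, smul_inv_smul₀ hc.ne']
          abel
      -- lower inclusion
      have hUlow : 0 ≤ 1 - t → AffineMap.homothety x₀ (1 - t) '' Ω ⊆ U := by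
        intro ht1
        rintro y ⟨z, hzΩ, hyz⟩
        set k := kfloor m a y with hk_def
        have hyk : y ∈ cube m a k := mem_cube_kfloor hm a y
        have hdist : dist y (φ k) < sqD * m := by
          refine dist_lt_sqrt_mul hD hm y (φ k) fun i => ?_
          obtain ⟨h1, h2⟩ := hyk i
          have : φ k i = m * k i + a i := rfl
          rw [Real.dist_eq, abs_lt]
          constructor <;> nlinarith
        have hbally : ball y (t * ρ) ⊆ Ω := by
          intro b hb
          set u := b - y with hu_def
          have hu : ‖u‖ < t * ρ := by rw [hu_def, ← dist_eq_norm]; exact hb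
          have hq' : x₀ + t⁻¹ • u ∈ Ω := by
            apply hball
            rw [mem_ball_iff_norm]
            have : x₀ + t⁻¹ • u - x₀ = t⁻¹ • u := by abel
            rw [this, norm_smul, Real.norm_eq_abs, abs_of_pos (inv_pos.mpr ht0)]
            calc t⁻¹ * ‖u‖ < t⁻¹ * (t * ρ) := by
                  exact mul_lt_mul_of_pos_left hu (inv_pos.mpr ht0)
              _ = ρ := by field_simp
          have hb_eq : b = (1 - t) • z + t • (x₀ + t⁻¹ • u) := by
            have hy_eq : y = (1 - t) • (z - x₀) + x₀ := by
              rw [← hyz, AffineMap.homothety_apply]; simp [vsub_eq_sub, vadd_eq_add]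
            have hbu : b = y + u := by rw [hu_def]; abel
            rw [hbu, hy_eq]
            have ht' : t ≠ 0 := ht0.ne'
            match_scalars <;> field_simp <;> ring
          rw [hb_eq]
          exact hconv hzΩ hq' ht1 ht0.le (by ring)
        have hkK : k ∈ K := by
          show φ k ∈ Ω
          apply hbally
          rw [mem_ball, dist_comm, htρ]
          exact hdist
        simp only [hU_def, Set.mem_iUnion]
        exact ⟨k, hkK, hyk⟩
      -- volume comparisons in ℝ
      set V := (volume Ω).toReal with hV_def
      have hV0 : 0 ≤ V := ENNReal.toReal_nonneg
      set N := (K.ncard : ℝ) with hN_def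
      have hN0 : 0 ≤ N := by positivity
      have hUvol_real : (volume U).toReal = N * m ^ D := by
        rw [hUvol, ENNReal.toReal_mul, ENNReal.toReal_ofReal (by positivity)]
        simp [hN_def]
      have key_up : N * m ^ D ≤ (1 + t) ^ D * V := by
        have h1 : volume U ≤ ENNReal.ofReal ((1 + t) ^ D) * volume Ω := by
          refine le_trans (measure_mono hUup) ?_
          rw [Measure.addHaar_image_homothety, finrank_euclideanSpace_fin, hclosure_vol,
            abs_of_nonneg (by positivity)]
        have h2 : ENNReal.ofReal ((1 + t) ^ D) * volume Ω ≠ ⊤ :=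
          ENNReal.mul_ne_top ENNReal.ofReal_ne_top hvolfin
        have := ENNReal.toReal_mono h2 h1
        rw [hUvol_real] at this
        rwa [ENNReal.toReal_mul, ENNReal.toReal_ofReal (by positivity)] at this
      have key_low : 0 ≤ 1 - t → (1 - t) ^ D * V ≤ N * m ^ D := by
        intro ht1
        have h1 : ENNReal.ofReal ((1 - t) ^ D) * volume Ω ≤ volume U := by
          have := measure_mono (μ := volume) (hUlow ht1)
          rwa [Measure.addHaar_image_homothety, finrank_euclideanSpace_fin,
            abs_of_nonneg (by positivity)] at this
        have hUfin : volume U ≠ ⊤ := by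
          rw [hUvol]; exact ENNReal.mul_ne_top (ENNReal.natCast_ne_top _) ENNReal.ofReal_ne_top
        have := ENNReal.toReal_mono hUfin h1
        rw [hUvol_real] at this
        rwa [ENNReal.toReal_mul, ENNReal.toReal_ofReal (by positivity)] at this
      clear_value sqD t V N
      -- final arithmetic
      set C := (D : ℝ) * sqD * (1 + sqD) ^ D + sqD with hC_def
      have key : |N * m ^ D - V| ≤ C * (m / ρ) * V := by
        rw [abs_le]
        constructor
        · -- lower:  -(C (m/ρ) V) ≤ N m^D - V, i.e. V - N m^D ≤ C (m/ρ) V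
          rcases le_or_gt t 1 with ht1 | ht1
          · have hber : 1 - (D : ℝ) * t ≤ (1 - t) ^ D := by
              have := one_add_mul_le_pow (a := -t) (by linarith) D
              calc 1 - (D : ℝ) * t = 1 + D * (-t) := by ring
                _ ≤ (1 + -t) ^ D := this
                _ = (1 - t) ^ D := by ring_nf
            have h1 : (1 - (D : ℝ) * t) * V ≤ N * m ^ D := by
              calc (1 - (D : ℝ) * t) * V ≤ (1 - t) ^ D * V :=
                    mul_le_mul_of_nonneg_right hber hV0
                _ ≤ N * m ^ D := key_low (by linarith)
            have h2 : (D : ℝ) * t ≤ C * (m / ρ) := by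
              have h3 : (1:ℝ) ≤ (1 + sqD) ^ D := one_le_pow₀ (by linarith)
              have h4 : (0:ℝ) ≤ (D:ℝ) * sqD * (m / ρ) := by positivity
              have h5 := mul_le_mul_of_nonneg_left h3 h4
              have h6 : (0:ℝ) ≤ sqD * (m / ρ) := by positivity
              rw [hC_def, ht_def]
              nlinarith [h5, h6]
            nlinarith [mul_le_mul_of_nonneg_right h2 hV0]
          · -- t > 1 : V - N m^D ≤ V ≤ sqD (m/ρ) V ≤ C (m/ρ) V
            have h1 : (1:ℝ) ≤ sqD * (m / ρ) := by rw [← ht_def]; linarith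
            have h2 : V ≤ C * (m / ρ) * V := by
              have : sqD * (m / ρ) ≤ C * (m / ρ) := by
                rw [hC_def]
                have : (0:ℝ) ≤ (D : ℝ) * sqD * (1 + sqD) ^ D * (m / ρ) := by positivity
                nlinarith
              nlinarith
            have h3 : 0 ≤ N * m ^ D := by positivity
            linarith
        · -- upper : N m^D - V ≤ ((1+t)^D - 1) V ≤ D t (1+t)^D V ≤ C (m/ρ) V
          have h1 : N * m ^ D - V ≤ ((1 + t) ^ D - 1) * V := by
            have := key_up; nlinarith
          have h2 : ((1 + t) ^ D - 1) * V ≤ (D : ℝ) * t * (1 + t) ^ D * V :=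
            mul_le_mul_of_nonneg_right (pow_sub_one_le t ht0.le D) hV0
          have h3 : (D : ℝ) * t * (1 + t) ^ D ≤ C * (m / ρ) := by
            have hpow : (1 + t) ^ D ≤ (1 + sqD) ^ D := pow_le_pow_left₀ (by positivity) (by linarith) D
            have h5 : (0:ℝ) ≤ (D:ℝ) * sqD * (m / ρ) := by positivity
            have h6 := mul_le_mul_of_nonneg_left hpow h5
            have h7 : (0:ℝ) ≤ sqD * (m / ρ) := by positivity
            rw [hC_def]
            calc (D : ℝ) * t * (1 + t) ^ D = (D:ℝ) * sqD * (m / ρ) * (1+t)^D := by rw [ht_def]; ring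
              _ ≤ (D:ℝ) * sqD * (m / ρ) * (1+sqD)^D := h6
              _ ≤ ((D:ℝ) * sqD * (1+sqD)^D + sqD) * (m / ρ) := by nlinarith [h7]
          calc N * m ^ D - V ≤ (D : ℝ) * t * (1 + t) ^ D * V := le_trans h1 h2
            _ ≤ C * (m / ρ) * V := mul_le_mul_of_nonneg_right h3 hV0
      -- convert to the stated form
      rw [hncard, ← hN_def, zpow_neg, zpow_natCast]
      have hP : (0:ℝ) < m ^ D := by positivity
      have heq : N - (m ^ D)⁻¹ * V = (N * m ^ D - V) * (m ^ D)⁻¹ := by field_simp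
      rw [heq, abs_mul, abs_of_pos (inv_pos.mpr hP)]
      calc |N * m ^ D - V| * (m ^ D)⁻¹ ≤ (C * (m / ρ) * V) * (m ^ D)⁻¹ :=
            mul_le_mul_of_nonneg_right key (inv_pos.mpr hP).le
        _ = C * (m / ρ) * ((m ^ D)⁻¹ * V) := by ring
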